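/- For every integer n ≥ 2 there exists a school choice problem P with n students and n schools, each of quota 1 (every student ranking all n schools above the null school), such that: (i) DA(P) is the unique stable matching of P and is Pareto-efficient; (ii) max_{i∈I} rk_i(DA_i(P)) = n; and (iii) there exists a matching μ of P with max_{i∈I} rk_i(μ(i)) = 2. Consequently, every stable-dominating matching ν of P satisfies max_{i∈I} rk_i(ν(i)) = n, so the Rawlsian inequality ratio of any stable-dominating mechanism attains n/2. -/

import Mathlib

/-!
A school choice problem: finitely many students `I` and schools `S`
(with a distinguished null school of quota `|I|`).  Each student `i` has a
strict preference over schools represented by its rank function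
`rk i : S → ℕ` (a bijection onto `{1, …, |S|}`, where rank 1 is the most
preferred school); each school `s` has a quota `quota s ≥ 1` and a strict
priority over students represented by `prio s : I → ℕ`
(`i ▷_s j` iff `prio s i < prio s j`).
-/
structure SchoolChoice (I S : Type) [Fintype I] [Fintype S]
    [DecidableEq I] [DecidableEq S] where
  nullSchool : S
  quota : S → ℕ
  rk : I → S → ℕ
  prio : S → I → ℕ
  quota_pos : ∀ s : S, 1 ≤ quota s
  quota_null : quota nullSchool = Fintype.card I
  rk_inj : ∀ i : I, Function.Injective (rk i)
  rk_mem : ∀ (i : I) (s : S), rk i s ∈ Finset.Icc 1 (Fintype.card S)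
  prio_inj : ∀ s : S, Function.Injective (prio s)

namespace SchoolChoice

open scoped Classical

variable {I S : Type} [Fintype I] [Fintype S] [DecidableEq I] [DecidableEq S]

/-- `μ` is a matching: no school is assigned more students than its quota. -/
def IsMatching (P : SchoolChoice I S) (μ : I → S) : Prop :=
  ∀ s : S, (Finset.univ.filter fun i => μ i = s).card ≤ P.quota s

/-- Given the sets `R i` of schools that have rejected student `i` so far,
student `i` proposes to her most preferred school that has not rejected her. -/
noncomputable def propose (P : SchoolChoice I S) (R : I → Finset S) (i : I) : S :=
  if h : (Finset.univ \ R i).Nonempty then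
    (Finset.exists_min_image (Finset.univ \ R i) (P.rk i) h).choose
  else P.nullSchool

/-- At the DA round with rejection state `R`, school `s` rejects student `i`:
`i` applies to `s` and at least `quota s` applicants to `s` have higher priority. -/
def rejectsAt (P : SchoolChoice I S) (R : I → Finset S) (s : S) (i : I) : Prop :=
  P.propose R i = s ∧
    P.quota s ≤ (Finset.univ.filter fun j =>
      P.propose R j = s ∧ P.prio s j < P.prio s i).card

/-- One round of student-proposing Deferred Acceptance: record new rejections. -/
noncomputable def stepR (P : SchoolChoice I S) (R : I → Finset S) : I → Finset S :=
  fun i => R i ∪ (Finset.univ.filter fun s => P.rejectsAt R s i)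

/-- Rejection state after `n` rounds of Deferred Acceptance. -/
noncomputable def daR (P : SchoolChoice I S) : ℕ → I → Finset S
  | 0 => fun _ => (∅ : Finset S)
  | n + 1 => P.stepR (P.daR n)

/-- The outcome of the student-proposing Deferred Acceptance algorithm:
iterate rounds until no rejection occurs (which happens within
`|I|·|S| + 1` rounds); each student is matched to the school holding her. -/
noncomputable def DA (P : SchoolChoice I S) : I → S :=
  P.propose (P.daR (Fintype.card I * Fintype.card S + 1))

/-- A matching `ν` is stable-dominating if every student weakly prefers
`ν` to the DA outcome. -/
def StableDominating (P : SchoolChoice I S) (ν : I → S) : Prop :=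
  P.IsMatching ν ∧ ∀ i : I, P.rk i (ν i) ≤ P.rk i (P.DA i)

/-- Student `i` is unimprovable: every stable-dominating matching assigns `i`
to her DA school. -/
def Unimprovable (P : SchoolChoice I S) (i : I) : Prop :=
  ∀ ν : I → S, P.StableDominating ν → ν i = P.DA i

/-- Edge of the envy digraph `G^DA(P)`: `i` prefers `j`'s DA school to her own. -/
def Envy (P : SchoolChoice I S) (i j : I) : Prop :=
  P.rk i (P.DA j) < P.rk i (P.DA i)

/-- Student `i` lies on a directed cycle of the envy digraph `G^DA(P)`. -/
def OnCycle (P : SchoolChoice I S) (i : I) : Prop :=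
  ∃ (m : ℕ) (c : ℕ → I), 0 < m ∧ c 0 = i ∧ c m = i ∧
    ∀ k < m, P.Envy (c k) (c (k + 1))

/-- Student `i` desires school `s` in matching `μ`. -/
def Desires (P : SchoolChoice I S) (μ : I → S) (i : I) (s : S) : Prop :=
  P.rk i s < P.rk i (μ i)

/-- `μ` is non-wasteful: every desired school is filled to quota. -/
def NonWasteful (P : SchoolChoice I S) (μ : I → S) : Prop :=
  ∀ s : S, (∃ i : I, P.Desires μ i s) →
    (Finset.univ.filter fun i => μ i = s).card = P.quota s

/-- `μ` is stable: a non-wasteful matching with no priority violations. -/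
def Stable (P : SchoolChoice I S) (μ : I → S) : Prop :=
  P.IsMatching μ ∧ P.NonWasteful μ ∧
    ¬ ∃ (i j : I) (s : S), P.Desires μ i s ∧ μ j = s ∧ P.prio s i < P.prio s j

/-- `μ` Pareto-dominates `ν`. -/
def ParetoDominates (P : SchoolChoice I S) (μ ν : I → S) : Prop :=
  (∀ i : I, P.rk i (μ i) ≤ P.rk i (ν i)) ∧ ∃ i : I, P.rk i (μ i) < P.rk i (ν i)

/-- `μ` is a Pareto-efficient matching. -/
def ParetoEfficient (P : SchoolChoice I S) (μ : I → S) : Prop :=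
  P.IsMatching μ ∧ ∀ ν : I → S, P.IsMatching ν → ¬ P.ParetoDominates ν μ

end SchoolChoice

section Example

open SchoolChoice
open scoped Classical

variable {n : ℕ}

/-- The example problem. -/
noncomputable def exP (n : ℕ) (hn : 2 ≤ n) : SchoolChoice (Fin n) (Fin (n + 1)) where
  nullSchool := Fin.last n
  quota s := if s = Fin.last n then n else 1
  rk i s :=
    if (i : ℕ) = 0 then (s : ℕ) + 1
    else if (s : ℕ) = (i : ℕ) - 1 then 1
    else if (s : ℕ) = (i : ℕ) then 2
    else if (s : ℕ) = n then n + 1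
    else if (s : ℕ) < (i : ℕ) then (s : ℕ) + 3
    else (s : ℕ) + 1
  prio s i := if (i : ℕ) = (s : ℕ) + 1 then 0 else (i : ℕ) + 1
  quota_pos s := by show 1 ≤ (if s = Fin.last n then n else 1); split <;> omega
  quota_null := by simp
  rk_inj i := by
    intro s t h
    have hs := s.isLt; have ht := t.isLt; have hi := i.isLt
    apply Fin.ext
    dsimp only at h
    split_ifs at h <;> omega
  rk_mem i s := by
    have hs := s.isLt; have ht := i.isLt
    simp only [Finset.mem_Icc, Fintype.card_fin]
    split_ifs <;> omega
  prio_inj s := by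
    intro i j h
    apply Fin.ext
    dsimp only at h
    split_ifs at h <;> omega


lemma propose_eq_of {I S : Type} [Fintype I] [Fintype S] [DecidableEq I] [DecidableEq S]
    (P : SchoolChoice I S) (R : I → Finset S) (i : I) (s₀ : S)
    (h₀ : s₀ ∉ R i) (hmin : ∀ s, s ∉ R i → P.rk i s₀ ≤ P.rk i s) :
    P.propose R i = s₀ := by
  have hne : (Finset.univ \ R i).Nonempty :=
    ⟨s₀, Finset.mem_sdiff.mpr ⟨Finset.mem_univ _, h₀⟩⟩
  unfold SchoolChoice.propose
  rw [dif_pos hne]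
  obtain ⟨hc, hm⟩ := (Finset.exists_min_image (Finset.univ \ R i) (P.rk i) hne).choose_spec
  apply P.rk_inj i
  have h1 := hm s₀ (Finset.mem_sdiff.mpr ⟨Finset.mem_univ _, h₀⟩)
  have h2 := hmin _ (Finset.mem_sdiff.mp hc).2
  exact le_antisymm h1 h2

lemma rk_def (hn : 2 ≤ n) (i : Fin n) (s : Fin (n + 1)) :
    (exP n hn).rk i s =
      (if (i : ℕ) = 0 then (s : ℕ) + 1
      else if (s : ℕ) = (i : ℕ) - 1 then 1
      else if (s : ℕ) = (i : ℕ) then 2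
      else if (s : ℕ) = n then n + 1
      else if (s : ℕ) < (i : ℕ) then (s : ℕ) + 3
      else (s : ℕ) + 1) := rfl

lemma prio_def (hn : 2 ≤ n) (s : Fin (n + 1)) (i : Fin n) :
    (exP n hn).prio s i = (if (i : ℕ) = (s : ℕ) + 1 then 0 else (i : ℕ) + 1) := rfl

lemma quota_def (hn : 2 ≤ n) (s : Fin (n + 1)) :
    (exP n hn).quota s = (if s = Fin.last n then n else 1) := rfl

lemma quota_ne_last (hn : 2 ≤ n) (s : Fin (n + 1)) (h : (s : ℕ) ≠ n) :
    (exP n hn).quota s = 1 := by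
  rw [quota_def, if_neg]
  intro hc; exact h (by rw [hc]; rfl)

lemma rk_one_le (hn : 2 ≤ n) (i : Fin n) (s : Fin (n + 1)) : 1 ≤ (exP n hn).rk i s :=
  (Finset.mem_Icc.mp ((exP n hn).rk_mem i s)).1

/-- Rejection state after `t` rounds. -/
noncomputable def Rt (n t : ℕ) : Fin n → Finset (Fin (n + 1)) :=
  fun i => if (i : ℕ) = 0 then Finset.univ.filter (fun s => (s : ℕ) < min t (n - 1)) else ∅

lemma propose_Rt (hn : 2 ≤ n) (t : ℕ) (i : Fin n) :
    (exP n hn).propose (Rt n t) i =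
      if (i : ℕ) = 0 then (⟨min t (n - 1), by omega⟩ : Fin (n + 1))
      else ⟨(i : ℕ) - 1, by omega⟩ := by
  by_cases hi : (i : ℕ) = 0
  · rw [if_pos hi]
    apply propose_eq_of
    · simp only [Rt, if_pos hi, Finset.mem_filter, Finset.mem_univ, true_and, not_lt,
        Fin.val_mk]
      omega
    · intro s hs
      simp only [Rt, if_pos hi, Finset.mem_filter, Finset.mem_univ, true_and, not_lt] at hs
      rw [rk_def, rk_def, if_pos hi, if_pos hi]
      simp only
      omega
  · rw [if_neg hi]
    apply propose_eq_of
    · simp [Rt, hi]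
    · intro s _
      have : (exP n hn).rk i ⟨(i : ℕ) - 1, by omega⟩ = 1 := by
        rw [rk_def, if_neg hi, if_pos rfl]
      rw [this]; exact rk_one_le hn i s

lemma stepR_Rt (hn : 2 ≤ n) (t : ℕ) :
    (exP n hn).stepR (Rt n t) = Rt n (t + 1) := by
  funext i
  unfold SchoolChoice.stepR
  by_cases hi : (i : ℕ) = 0
  · by_cases ht : t < n - 1
    · have hmt : min t (n - 1) = t := by omega
      have hmt1 : min (t + 1) (n - 1) = t + 1 := by omega
      ext s
      simp only [Rt, if_pos hi, Finset.mem_union, Finset.mem_filter, Finset.mem_univ,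
        true_and, hmt, hmt1]
      constructor
      · rintro (h | h)
        · omega
        · obtain ⟨hp, -⟩ := h
          rw [propose_Rt hn t i, if_pos hi] at hp
          have : (s : ℕ) = min t (n - 1) := by rw [← hp]
          omega
      · intro h
        rcases Nat.lt_or_ge (s : ℕ) t with h' | h'
        · exact Or.inl h'
        · have hst : (s : ℕ) = t := by omega
          right
          constructor
          · rw [propose_Rt hn t i, if_pos hi]
            exact Fin.ext (by simp [hst, hmt])
          · have hq : (exP n hn).quota s = 1 := quota_ne_last hn s (by omega)
            rw [hq]
            have hj : (⟨t + 1, by omega⟩ : Fin n) ∈ Finset.univ.filter (fun j =>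
                (exP n hn).propose (Rt n t) j = s ∧
                (exP n hn).prio s j < (exP n hn).prio s i) := by
              simp only [Finset.mem_filter, Finset.mem_univ, true_and]
              constructor
              · rw [propose_Rt hn t]
                rw [if_neg (by simp)]
                exact Fin.ext (by simp [hst])
              · rw [prio_def, prio_def, if_pos (by simp [hst]), if_neg (by omega)]
                omega
            exact Finset.card_pos.mpr ⟨_, hj⟩
    · have hm : min (t + 1) (n - 1) = min t (n - 1) := by omega
      have hfe : (Finset.univ.filter fun s => (exP n hn).rejectsAt (Rt n t) s i) = ∅ := by
        apply Finset.filter_false_of_mem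
        intro s _
        rintro ⟨hp, hcard⟩
        rw [propose_Rt hn t i, if_pos hi] at hp
        have hsv : (s : ℕ) = min t (n - 1) := by rw [← hp]
        have hq : (exP n hn).quota s = 1 := quota_ne_last hn s (by omega)
        rw [hq] at hcard
        obtain ⟨j, hj⟩ := Finset.card_pos.mp (Nat.lt_of_lt_of_le Nat.zero_lt_one hcard)
        simp only [Finset.mem_filter, Finset.mem_univ, true_and] at hj
        obtain ⟨hpj, hprio⟩ := hj
        rw [propose_Rt hn t j] at hpj
        by_cases hj0 : (j : ℕ) = 0
        · rw [if_pos hj0] at hpj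
          have : (exP n hn).prio s j = (exP n hn).prio s i := by
            congr 1; exact Fin.ext (by omega)
          omega
        · rw [if_neg hj0] at hpj
          have : (j : ℕ) - 1 = (s : ℕ) := by rw [← hpj]
          have hjlt := j.isLt
          omega
      rw [hfe, Finset.union_empty]
      simp only [Rt, if_pos hi, hm]
  · have hfe : (Finset.univ.filter fun s => (exP n hn).rejectsAt (Rt n t) s i) = ∅ := by
      apply Finset.filter_false_of_mem
      intro s _
      rintro ⟨hp, hcard⟩
      rw [propose_Rt hn t i, if_neg hi] at hp
      have hsv : (s : ℕ) = (i : ℕ) - 1 := by rw [← hp]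
      have hilt := i.isLt
      have hq : (exP n hn).quota s = 1 := quota_ne_last hn s (by omega)
      rw [hq] at hcard
      obtain ⟨j, hj⟩ := Finset.card_pos.mp (Nat.lt_of_lt_of_le Nat.zero_lt_one hcard)
      simp only [Finset.mem_filter, Finset.mem_univ, true_and] at hj
      have : (exP n hn).prio s i = 0 := by
        rw [prio_def, if_pos (by omega)]
      omega
    rw [hfe, Finset.union_empty]
    simp only [Rt, if_neg hi]

lemma daR_Rt (hn : 2 ≤ n) (t : ℕ) : (exP n hn).daR t = Rt n t := by
  induction t with
  | zero =>
    funext i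
    simp only [SchoolChoice.daR, Rt]
    split <;> simp
  | succ t ih =>
    show (exP n hn).stepR ((exP n hn).daR t) = _
    rw [ih, stepR_Rt]

lemma DA_eq (hn : 2 ≤ n) (i : Fin n) :
    (exP n hn).DA i =
      if (i : ℕ) = 0 then (⟨n - 1, by omega⟩ : Fin (n + 1))
      else ⟨(i : ℕ) - 1, by omega⟩ := by
  unfold SchoolChoice.DA
  rw [daR_Rt, propose_Rt]
  have hm : min (Fintype.card (Fin n) * Fintype.card (Fin (n + 1)) + 1) (n - 1) = n - 1 := by
    apply min_eq_right
    simp only [Fintype.card_fin]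
    exact le_trans (Nat.sub_le n 1) (by nlinarith)
  by_cases hi : (i : ℕ) = 0
  · rw [if_pos hi, if_pos hi]
    exact Fin.ext hm
  · rw [if_neg hi, if_neg hi]


lemma rk_DA (hn : 2 ≤ n) (i : Fin n) :
    (exP n hn).rk i ((exP n hn).DA i) = if (i : ℕ) = 0 then n else 1 := by
  rw [DA_eq, rk_def]
  by_cases hi : (i : ℕ) = 0
  · simp only [hi, if_true, reduceIte, Fin.val_mk]
    omega
  · simp [hi]

lemma matching_of_inj (hn : 2 ≤ n) (μ : Fin n → Fin (n + 1))
    (hμ : Function.Injective μ) : (exP n hn).IsMatching μ := by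
  intro s
  refine le_trans (Finset.card_le_one.mpr ?_) ((exP n hn).quota_pos s)
  intro a ha b hb
  simp only [Finset.mem_filter, Finset.mem_univ, true_and] at ha hb
  exact hμ (ha.trans hb.symm)

lemma DA_injective (hn : 2 ≤ n) : Function.Injective ((exP n hn).DA) := by
  intro a b h
  rw [DA_eq, DA_eq] at h
  have ha := a.isLt; have hb := b.isLt
  have hv := congrArg Fin.val h
  apply Fin.ext
  by_cases h1 : (a : ℕ) = 0 <;> by_cases h2 : (b : ℕ) = 0 <;>
    simp only [h1, h2, if_true, if_false, reduceIte, Fin.val_mk] at hv <;> omega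

/-- If all students `i ≥ 1` are matched to school `i-1`, student `0` cannot
be matched to a school `< n-1`. -/
lemma no_clash (hn : 2 ≤ n) (ν : Fin n → Fin (n + 1)) (hm : (exP n hn).IsMatching ν)
    (h1 : ∀ i : Fin n, (i : ℕ) ≠ 0 → (ν i : ℕ) = (i : ℕ) - 1)
    (i0 : Fin n) (h0 : (i0 : ℕ) = 0) : ¬ ((ν i0 : ℕ) < n - 1) := by
  intro hv
  set s := ν i0 with hs
  have hq : (exP n hn).quota s = 1 := quota_ne_last hn s (by omega)
  have hcard := hm s
  rw [hq] at hcard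
  have hj : (⟨(s : ℕ) + 1, by omega⟩ : Fin n) ∈ Finset.univ.filter fun i => ν i = s := by
    simp only [Finset.mem_filter, Finset.mem_univ, true_and]
    apply Fin.ext
    rw [h1 _ (by simp)]
    simp only [Fin.val_mk]
    omega
  have hi0 : i0 ∈ Finset.univ.filter fun i => ν i = s := by
    simp [Finset.mem_filter]
    exact hs.symm
  have : 1 < (Finset.univ.filter fun i => ν i = s).card :=
    Finset.one_lt_card.mpr ⟨_, hj, i0, hi0, by
      intro hc
      have := congrArg Fin.val hc
      simp only [Fin.val_mk, h0] at this
      omega⟩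
  omega

/-- Any matching weakly preferred by everybody to DA equals DA. -/
lemma dominated_eq_DA (hn : 2 ≤ n) (ν : Fin n → Fin (n + 1))
    (hm : (exP n hn).IsMatching ν)
    (hrk : ∀ i : Fin n, (exP n hn).rk i (ν i) ≤ (exP n hn).rk i ((exP n hn).DA i)) :
    ν = (exP n hn).DA := by
  have h1 : ∀ i : Fin n, (i : ℕ) ≠ 0 → ν i = ⟨(i : ℕ) - 1, by omega⟩ := by
    intro i hi
    have h := hrk i
    rw [rk_DA, if_neg hi] at h
    have h' : (exP n hn).rk i (ν i) = 1 := le_antisymm h (rk_one_le hn i (ν i))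
    have h'' : (exP n hn).rk i (⟨(i : ℕ) - 1, by omega⟩ : Fin (n + 1)) = 1 := by
      rw [rk_def, if_neg hi, if_pos rfl]
    exact (exP n hn).rk_inj i (h'.trans h''.symm)
  funext i
  by_cases hi : (i : ℕ) = 0
  · have h := hrk i
    rw [rk_DA, if_pos hi, rk_def, if_pos hi] at h
    have hnc := no_clash hn ν hm (fun j hj => by rw [h1 j hj]) i hi
    rw [DA_eq, if_pos hi]
    exact Fin.ext (by simp only [Fin.val_mk]; omega)
  · rw [h1 i hi, DA_eq, if_neg hi]

lemma stable_eq_DA (hn : 2 ≤ n) (μ : Fin n → Fin (n + 1))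
    (hs : (exP n hn).Stable μ) : μ = (exP n hn).DA := by
  obtain ⟨hm, hnw, hnb⟩ := hs
  have h1 : ∀ i : Fin n, (i : ℕ) ≠ 0 → μ i = ⟨(i : ℕ) - 1, by omega⟩ := by
    intro i hi
    by_contra hne
    have hrk1 : (exP n hn).rk i (⟨(i : ℕ) - 1, by omega⟩ : Fin (n + 1)) = 1 := by
      rw [rk_def, if_neg hi, if_pos rfl]
    have hdes : (exP n hn).Desires μ i ⟨(i : ℕ) - 1, by omega⟩ := by
      have hne' : (exP n hn).rk i (μ i) ≠ 1 := by
        intro hc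
        exact hne ((exP n hn).rk_inj i (hc.trans hrk1.symm))
      have := rk_one_le hn i (μ i)
      rw [SchoolChoice.Desires, hrk1]
      omega
    have hcard := hnw _ ⟨i, hdes⟩
    have hq : (exP n hn).quota (⟨(i : ℕ) - 1, by omega⟩ : Fin (n + 1)) = 1 :=
      quota_ne_last hn _ (by simp only [Fin.val_mk]; omega)
    rw [hq] at hcard
    obtain ⟨j, hj⟩ := Finset.card_pos.mp (Nat.lt_of_lt_of_le Nat.zero_lt_one hcard.ge)
    simp only [Finset.mem_filter, Finset.mem_univ, true_and] at hj
    apply hnb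
    have hji : j ≠ i := fun hc => hne (hc ▸ hj)
    refine ⟨i, j, _, hdes, hj, ?_⟩
    have hp1 : (exP n hn).prio (⟨(i : ℕ) - 1, by omega⟩ : Fin (n + 1)) i = 0 := by
      rw [prio_def, if_pos (by simp only [Fin.val_mk]; omega)]
    have hp2 : (exP n hn).prio (⟨(i : ℕ) - 1, by omega⟩ : Fin (n + 1)) j = (j : ℕ) + 1 := by
      rw [prio_def, if_neg (by
        simp only [Fin.val_mk]
        intro hc
        exact hji (Fin.ext (by omega)))]
    rw [hp1, hp2]
    omega
  funext i
  by_cases hi : (i : ℕ) = 0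
  · have hnc := no_clash hn μ hm (fun j hj => by rw [h1 j hj]) i hi
    have hvle := (μ i).isLt
    rcases Nat.lt_or_ge (μ i : ℕ) n with hlt | hge
    · rw [DA_eq, if_pos hi]
      exact Fin.ext (by simp only [Fin.val_mk]; omega)
    · -- μ i is the null school; school n-1 is empty yet desired: wasteful
      exfalso
      have hvn : (μ i : ℕ) = n := by omega
      have hdes : (exP n hn).Desires μ i ⟨n - 1, by omega⟩ := by
        rw [SchoolChoice.Desires, rk_def, rk_def, if_pos hi, if_pos hi]
        simp only [Fin.val_mk]
        omega
      have hcard := hnw _ ⟨i, hdes⟩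
      have hq : (exP n hn).quota (⟨n - 1, by omega⟩ : Fin (n + 1)) = 1 :=
        quota_ne_last hn _ (by simp only [Fin.val_mk]; omega)
      rw [hq] at hcard
      obtain ⟨j, hj⟩ := Finset.card_pos.mp (Nat.lt_of_lt_of_le Nat.zero_lt_one hcard.ge)
      simp only [Finset.mem_filter, Finset.mem_univ, true_and] at hj
      have hjv := congrArg Fin.val hj
      simp only [Fin.val_mk] at hjv
      by_cases hj0 : (j : ℕ) = 0
      · have : j = i := Fin.ext (by omega)
        rw [this, hvn] at hjv
        omega
      · rw [h1 j hj0] at hjv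
        have := j.isLt
        simp only [Fin.val_mk] at hjv
        omega
  · rw [h1 i hi, DA_eq, if_neg hi]

lemma DA_filter_eq (hn : 2 ≤ n) (s : Fin (n + 1)) (hs : (s : ℕ) < n - 1) :
    (Finset.univ.filter fun j => (exP n hn).DA j = s) =
      {(⟨(s : ℕ) + 1, by omega⟩ : Fin n)} := by
  ext j
  simp only [Finset.mem_filter, Finset.mem_univ, true_and, Finset.mem_singleton]
  rw [DA_eq]
  have hjlt := j.isLt
  by_cases hj : (j : ℕ) = 0
  · rw [if_pos hj]
    constructor
    · intro h
      have := congrArg Fin.val h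
      simp only [Fin.val_mk] at this
      omega
    · intro h
      have := congrArg Fin.val h
      simp only [Fin.val_mk, hj] at this
      omega
  · rw [if_neg hj]
    constructor
    · intro h
      have := congrArg Fin.val h
      simp only [Fin.val_mk] at this
      exact Fin.ext (by simp only [Fin.val_mk]; omega)
    · intro h
      have := congrArg Fin.val h
      simp only [Fin.val_mk] at this
      exact Fin.ext (by simp only [Fin.val_mk]; omega)

lemma DA_stable (hn : 2 ≤ n) : (exP n hn).Stable ((exP n hn).DA) := by
  have hmatch : (exP n hn).IsMatching ((exP n hn).DA) :=
    matching_of_inj hn _ (DA_injective hn)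
  have hdes : ∀ (i : Fin n) (s : Fin (n + 1)), (exP n hn).Desires ((exP n hn).DA) i s →
      (i : ℕ) = 0 ∧ (s : ℕ) < n - 1 := by
    intro i s hd
    rw [SchoolChoice.Desires, rk_DA] at hd
    by_cases hi : (i : ℕ) = 0
    · rw [if_pos hi] at hd
      refine ⟨hi, ?_⟩
      rw [rk_def, if_pos hi] at hd
      omega
    · rw [if_neg hi] at hd
      have := rk_one_le hn i s
      omega
  refine ⟨hmatch, ?_, ?_⟩
  · intro s ⟨i, hd⟩
    obtain ⟨hi, hsv⟩ := hdes i s hd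
    rw [DA_filter_eq hn s hsv, quota_ne_last hn s (by omega)]
    simp
  · rintro ⟨i, j, s, hd, hj, hp⟩
    obtain ⟨hi, hsv⟩ := hdes i s hd
    have hjmem : j ∈ Finset.univ.filter fun k => (exP n hn).DA k = s := by
      simp [Finset.mem_filter, hj]
    rw [DA_filter_eq hn s hsv, Finset.mem_singleton] at hjmem
    rw [hjmem] at hp
    have hpj : (exP n hn).prio s (⟨(s : ℕ) + 1, by omega⟩ : Fin n) = 0 := by
      rw [prio_def, if_pos rfl]
    have hpi : (exP n hn).prio s i = (i : ℕ) + 1 := by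
      rw [prio_def, if_neg (by omega)]
    rw [hpj, hpi] at hp
    omega


lemma sup_rk_DA (hn : 2 ≤ n) :
    (Finset.univ.sup fun i : Fin n => (exP n hn).rk i ((exP n hn).DA i)) = n := by
  apply le_antisymm
  · exact Finset.sup_le fun i _ => by rw [rk_DA]; split <;> omega
  · have h : (exP n hn).rk (⟨0, by omega⟩ : Fin n) ((exP n hn).DA ⟨0, by omega⟩) ≤
        Finset.univ.sup fun i : Fin n => (exP n hn).rk i ((exP n hn).DA i) :=
      Finset.le_sup (f := fun i : Fin n => (exP n hn).rk i ((exP n hn).DA i))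
        (Finset.mem_univ _)
    rw [rk_DA, if_pos rfl] at h
    exact h

end Example

/-- For every `n ≥ 2` there is a school choice problem with `n`
students and `n` (ordinary) schools of quota 1, every student ranking all `n`
schools above the null school, such that: (i) `DA(P)` is the unique stable
matching and is Pareto-efficient; (ii) `max_i rk_i(DA_i(P)) = n`; (iii) some
matching `μ` has `max_i rk_i(μ i) = 2`.  Consequently every stable-dominating
matching `ν` has `max_i rk_i(ν i) = n`, so the Rawlsian inequality ratio of
any stable-dominating mechanism attains `n/2`. -/
theorem rawlsian_lower_bound_example (n : ℕ) (hn : 2 ≤ n) :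
    ∃ P : SchoolChoice (Fin n) (Fin (n + 1)),
      P.nullSchool = Fin.last n ∧
      (∀ s : Fin (n + 1), s ≠ P.nullSchool → P.quota s = 1) ∧
      (∀ i : Fin n, P.rk i P.nullSchool = n + 1) ∧
      -- (i) DA is the unique stable matching and is Pareto-efficient
      P.Stable P.DA ∧
      (∀ μ : Fin n → Fin (n + 1), P.Stable μ → μ = P.DA) ∧
      P.ParetoEfficient P.DA ∧
      -- (ii) the worst-off student under DA has rank n
      (Finset.univ.sup fun i : Fin n => P.rk i (P.DA i)) = n ∧
      -- (iii) an alternative matching whose worst-off student has rank 2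
      (∃ μ : Fin n → Fin (n + 1), P.IsMatching μ ∧
        (Finset.univ.sup fun i : Fin n => P.rk i (μ i)) = 2) ∧
      -- consequently, every stable-dominating matching has max rank n
      (∀ ν : Fin n → Fin (n + 1), P.StableDominating ν →
        (Finset.univ.sup fun i : Fin n => P.rk i (ν i)) = n) := by
  refine ⟨exP n hn, rfl, ?_, ?_, DA_stable hn, fun μ h => stable_eq_DA hn μ h, ?_, sup_rk_DA hn,
    ?_, ?_⟩
  · -- every ordinary school has quota 1
    intro s hs
    apply quota_ne_last
    intro hc
    exact hs (Fin.ext hc)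
  · -- the null school has rank n+1 for every student
    intro i
    have hnull : ((exP n hn).nullSchool : Fin (n + 1)) = Fin.last n := rfl
    rw [rk_def, hnull]
    have hi := i.isLt
    simp only [Fin.val_last]
    split_ifs <;> omega
  · -- DA is Pareto-efficient
    refine ⟨matching_of_inj hn _ (DA_injective hn), ?_⟩
    rintro ν hν ⟨hle, i, hlt⟩
    rw [dominated_eq_DA hn ν hν hle] at hlt
    exact lt_irrefl _ hlt
  · -- the alternative matching with max rank 2
    refine ⟨fun i => Fin.castSucc i,
      matching_of_inj hn _ (fun a b h => Fin.castSucc_injective n h), ?_⟩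
    have hrk : ∀ i : Fin n, (exP n hn).rk i (Fin.castSucc i) = if (i : ℕ) = 0 then 1 else 2 := by
      intro i
      rw [rk_def]
      by_cases hi : (i : ℕ) = 0
      · simp [hi]
      · rw [if_neg hi, if_neg (by simp only [Fin.coe_castSucc]; omega),
          if_pos (by simp only [Fin.coe_castSucc]), if_neg hi]
    apply le_antisymm
    · exact Finset.sup_le fun i _ => by rw [hrk]; split <;> omega
    · have h : (exP n hn).rk (⟨1, by omega⟩ : Fin n) (Fin.castSucc ⟨1, by omega⟩) ≤
          Finset.univ.sup fun i : Fin n => (exP n hn).rk i (Fin.castSucc i) :=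
        Finset.le_sup (f := fun i : Fin n => (exP n hn).rk i (Fin.castSucc i))
          (Finset.mem_univ _)
      rw [hrk, if_neg (by simp)] at h
      exact h
  · -- every stable-dominating matching has max rank n
    rintro ν ⟨hm, hrk⟩
    rw [dominated_eq_DA hn ν hm hrk]
    exact sup_rk_DA hn
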